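/- Let T be the translation from L_C into first-order logic defined by T(Rx₁…x_k)=Rx₁…x_k, T(x=y)=(x=y), T(¬φ)=¬T(φ), T(φ∧ψ)=T(φ)∧T(ψ), T(∃xφ)=∃xT(φ), and T(Cxφ)=∃x(Dx ∧ T(φ)) for a fresh unary predicate D. Then a sentence φ of L_C is satisfied positively by some nonempty model set if and only if T(φ) is satisfiable by some single structure in the ordinary first-order sense. -/

import Mathlib

/-- A τ-model together with an assignment: carrier `U`, a domain `dom ⊆ U`,
interpretations of the relation symbols, and an assignment of variables. -/
structure Model (U : Type) (Rel : Type) (ar : Rel → ℕ) where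
  dom : Set U
  rel : ∀ r : Rel, (Fin (ar r) → U) → Prop
  asg : ℕ → U

/-- First-order formulas over a relational signature (variables are `ℕ`). -/
inductive Fml (Rel : Type) (ar : Rel → ℕ) : Type where
  | atom (r : Rel) (v : Fin (ar r) → ℕ)
  | eq (x y : ℕ)
  | and (φ ψ : Fml Rel ar)
  | not (φ : Fml Rel ar)
  | ex (x : ℕ) (φ : Fml Rel ar)

variable {U : Type} {Rel : Type} {ar : Rel → ℕ}

def upd (f : ℕ → U) (x : ℕ) (a : U) : ℕ → U :=
  fun n => if n = x then a else f n

/-- Modify the assignment of a model at variable `x`. -/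
def setVar (M : Model U Rel ar) (x : ℕ) (a : U) : Model U Rel ar :=
  { M with asg := upd M.asg x a }

/-- Standard Tarskian satisfaction. -/
def Tarski : Model U Rel ar → Fml Rel ar → Prop
  | M, .atom r v => M.rel r (fun i => M.asg (v i))
  | M, .eq x y => M.asg x = M.asg y
  | M, .and φ ψ => Tarski M φ ∧ Tarski M ψ
  | M, .not φ => ¬ Tarski M φ
  | M, .ex x φ => ∃ a ∈ M.dom, Tarski (setVar M x a) φ

/-- `𝓜[F/x]` for a choice function `F`. -/
def updSet (𝓜 : Set (Model U Rel ar)) (x : ℕ) (F : Model U Rel ar → U) :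
    Set (Model U Rel ar) :=
  (fun M => setVar M x (F M)) '' 𝓜

/-- `𝓜[⊤/x]`: extend every assignment by every element of the respective domain. -/
def topSet (𝓜 : Set (Model U Rel ar)) (x : ℕ) : Set (Model U Rel ar) :=
  { N | ∃ M ∈ 𝓜, ∃ b ∈ M.dom, N = setVar M x b }

/-- Model-set semantics: `Sat true φ 𝓜` is `𝓜 ⊨⁺ φ` and `Sat false φ 𝓜` is `𝓜 ⊨⁻ φ`. -/
def Sat : Bool → Fml Rel ar → Set (Model U Rel ar) → Prop
  | pos, .atom r v, 𝓜 => ∀ M ∈ 𝓜, (M.rel r (fun i => M.asg (v i)) ↔ pos = true)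
  | pos, .eq x y, 𝓜 => ∀ M ∈ 𝓜, (M.asg x = M.asg y ↔ pos = true)
  | true, .and φ ψ, 𝓜 => Sat true φ 𝓜 ∧ Sat true ψ 𝓜
  | false, .and φ ψ, 𝓜 =>
      ∃ 𝓜' 𝓜'', 𝓜' ∪ 𝓜'' = 𝓜 ∧ Sat false φ 𝓜' ∧ Sat false ψ 𝓜''
  | pos, .not φ, 𝓜 => Sat (!pos) φ 𝓜
  | true, .ex x φ, 𝓜 =>
      ∃ F : Model U Rel ar → U, (∀ M ∈ 𝓜, F M ∈ M.dom) ∧ Sat true φ (updSet 𝓜 x F)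
  | false, .ex x φ, 𝓜 => Sat false φ (topSet 𝓜 x)

/-- Formulas of `L_C*`: first-order logic extended with the quantifier `Cx`. -/
inductive FmlC (Rel : Type) (ar : Rel → ℕ) : Type where
  | atom (r : Rel) (v : Fin (ar r) → ℕ)
  | eq (x y : ℕ)
  | and (φ ψ : FmlC Rel ar)
  | not (φ : FmlC Rel ar)
  | ex (x : ℕ) (φ : FmlC Rel ar)
  | C (x : ℕ) (φ : FmlC Rel ar)

/-- The common domain of a model set: the intersection of all domains. -/
def commonDom (𝓜 : Set (Model U Rel ar)) : Set U :=
  { a | ∀ M ∈ 𝓜, a ∈ M.dom }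

/-- `𝓜[A/x]`: extend every assignment by every element of `A`. -/
def subSet (𝓜 : Set (Model U Rel ar)) (x : ℕ) (A : Set U) : Set (Model U Rel ar) :=
  { N | ∃ M ∈ 𝓜, ∃ b ∈ A, N = setVar M x b }

/-- Model-set semantics for `L_C*`: `SatC true φ 𝓜` is `𝓜 ⊨⁺ φ`, `SatC false φ 𝓜`
is `𝓜 ⊨⁻ φ`.  `Cx` is interpreted positively by a constant choice function into the
common domain, and negatively via all extensions by elements of the common domain. -/
def SatC : Bool → FmlC Rel ar → Set (Model U Rel ar) → Prop
  | pos, .atom r v, 𝓜 => ∀ M ∈ 𝓜, (M.rel r (fun i => M.asg (v i)) ↔ pos = true)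
  | pos, .eq x y, 𝓜 => ∀ M ∈ 𝓜, (M.asg x = M.asg y ↔ pos = true)
  | true, .and φ ψ, 𝓜 => SatC true φ 𝓜 ∧ SatC true ψ 𝓜
  | false, .and φ ψ, 𝓜 =>
      ∃ 𝓜' 𝓜'', 𝓜' ∪ 𝓜'' = 𝓜 ∧ SatC false φ 𝓜' ∧ SatC false ψ 𝓜''
  | pos, .not φ, 𝓜 => SatC (!pos) φ 𝓜
  | true, .ex x φ, 𝓜 =>
      ∃ F : Model U Rel ar → U, (∀ M ∈ 𝓜, F M ∈ M.dom) ∧ SatC true φ (updSet 𝓜 x F)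
  | false, .ex x φ, 𝓜 => SatC false φ (topSet 𝓜 x)
  | true, .C x φ, 𝓜 =>
      ∃ a : U, (∀ M ∈ 𝓜, a ∈ M.dom) ∧ SatC true φ (updSet 𝓜 x (fun _ => a))
  | false, .C x φ, 𝓜 => SatC false φ (subSet 𝓜 x (commonDom 𝓜))

/-- No occurrence of `Cx` at all. -/
def CFree : FmlC Rel ar → Prop
  | .atom _ _ => True
  | .eq _ _ => True
  | .and φ ψ => CFree φ ∧ CFree ψ
  | .not φ => CFree φ
  | .ex _ φ => CFree φ
  | .C _ _ => False

/-- Membership in the fragment `L_C`: `Cx` never occurs in the scope of a negation. -/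
def LC : FmlC Rel ar → Prop
  | .atom _ _ => True
  | .eq _ _ => True
  | .and φ ψ => LC φ ∧ LC ψ
  | .not φ => CFree φ
  | .ex _ φ => LC φ
  | .C _ φ => LC φ

/-- Free variables of an `L_C*`-formula. -/
def fv : FmlC Rel ar → Set ℕ
  | .atom _ v => Set.range v
  | .eq x y => {x, y}
  | .and φ ψ => fv φ ∪ fv ψ
  | .not φ => fv φ
  | .ex x φ => fv φ \ {x}
  | .C x φ => fv φ \ {x}

/-- The signature extended by a fresh unary predicate `D` (the symbol `none`). -/
def arD (ar : Rel → ℕ) : Option Rel → ℕ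
  | none => 1
  | some r => ar r

/-- The translation `T` from `L_C` into first-order logic over the extended signature:
identity on first-order constructors, `T(Cxφ) = ∃x(Dx ∧ T(φ))`. -/
def T : FmlC Rel ar → Fml (Option Rel) (arD ar)
  | .atom r v => .atom (some r) v
  | .eq x y => .eq x y
  | .and φ ψ => .and (T φ) (T ψ)
  | .not φ => .not (T φ)
  | .ex x φ => .ex x (T φ)
  | .C x φ => .ex x (.and (.atom none (fun _ => x)) (T φ))

/-- Expand a model by interpreting the fresh predicate `D` as the set `A`. -/
def expand (A : Set U) (M : Model U Rel ar) : Model U (Option Rel) (arD ar) where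
  dom := M.dom
  rel := fun o => match o with
    | none => fun v => v ⟨0, Nat.one_pos⟩ ∈ A
    | some r => M.rel r
  asg := M.asg

/-- `𝓜_D`: expand every structure of `𝓜` by interpreting `D` as the common domain. -/
def expandSet (𝓜 : Set (Model U Rel ar)) : Set (Model U (Option Rel) (arD ar)) :=
  expand (commonDom 𝓜) '' 𝓜

/-- Forget the predicate `D` of a model over the extended signature. -/
def restrict (M : Model U (Option Rel) (arD ar)) : Model U Rel ar where
  dom := M.dom
  rel := fun r => M.rel (some r)
  asg := M.asg

/-- A sentence of `L_C` is positively satisfied by some nonempty model set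
iff its translation `T(φ)` is satisfiable in the ordinary first-order sense. -/
lemma expand_setVar (A : Set U) (M : Model U Rel ar) (x : ℕ) (a : U) :
    expand A (setVar M x a) = setVar (expand A M) x a := rfl

lemma restrict_setVar (M : Model U (Option Rel) (arD ar)) (x : ℕ) (a : U) :
    restrict (setVar M x a) = setVar (restrict M) x a := rfl

lemma expand_restrict (M : Model U (Option Rel) (arD ar)) :
    expand {u | M.rel none (fun _ => u)} (restrict M) = M := by
  cases M with
  | mk dom rel asg =>
    simp only [expand, restrict]
    congr 1
    funext o
    cases o with
    | none =>
      funext v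
      simp only [Set.mem_setOf_eq]
      congr 1
      funext i
      have hi : i = ⟨0, Nat.one_pos⟩ := by
        apply Fin.ext
        show (i : ℕ) = 0
        have hlt : (i : ℕ) < 1 := i.isLt
        omega
      rw [hi]
    | some r => rfl

lemma commonDom_updSet (𝓜 : Set (Model U Rel ar)) (x : ℕ) (F : Model U Rel ar → U) :
    commonDom (updSet 𝓜 x F) = commonDom 𝓜 := by
  ext b
  constructor
  · intro h M hM
    exact h (setVar M x (F M)) ⟨M, hM, rfl⟩
  · rintro h N ⟨M, hM, rfl⟩
    exact h M hM

/-- Pointwise characterization of `SatC` for `C`-free formulas. -/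
lemma satC_cfree (φ : FmlC Rel ar) (h : CFree φ) :
    ∀ (pos : Bool) (𝓜 : Set (Model U Rel ar)) (A : Set U),
      SatC pos φ 𝓜 ↔ ∀ M ∈ 𝓜, (Tarski (expand A M) (T φ) ↔ pos = true) := by
  induction φ with
  | atom r v => intro pos 𝓜 A; cases pos <;> exact Iff.rfl
  | eq x y => intro pos 𝓜 A; cases pos <;> exact Iff.rfl
  | and φ ψ ihφ ihψ =>
    intro pos 𝓜 A
    obtain ⟨hφ, hψ⟩ := h
    cases pos with
    | true =>
      rw [show SatC true (.and φ ψ) 𝓜 = (SatC true φ 𝓜 ∧ SatC true ψ 𝓜) from rfl,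
        ihφ hφ true 𝓜 A, ihψ hψ true 𝓜 A]
      constructor
      · rintro ⟨h1, h2⟩ M hM
        simp only [iff_true] at h1 h2 ⊢
        exact ⟨h1 M hM, h2 M hM⟩
      · intro hh
        constructor <;> intro M hM <;> simp only [iff_true]
        · exact ((hh M hM).mpr rfl).1
        · exact ((hh M hM).mpr rfl).2
    | false =>
      constructor
      · rintro ⟨𝓜', 𝓜'', hun, h1, h2⟩ M hM
        rw [ihφ hφ false 𝓜' A] at h1
        rw [ihψ hψ false 𝓜'' A] at h2
        simp only [Bool.false_eq_true, iff_false]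
        rw [← hun] at hM
        rcases hM with hM | hM
        · intro c; exact ((by simpa using h1 M hM : ¬ _)) c.1
        · intro c; exact ((by simpa using h2 M hM : ¬ _)) c.2
      · intro hh
        refine ⟨{M ∈ 𝓜 | ¬ Tarski (expand A M) (T φ)},
                {M ∈ 𝓜 | Tarski (expand A M) (T φ)}, ?_, ?_, ?_⟩
        · ext M
          constructor
          · rintro (⟨hM, _⟩ | ⟨hM, _⟩) <;> exact hM
          · intro hM
            by_cases hc : Tarski (expand A M) (T φ)
            · exact Or.inr ⟨hM, hc⟩
            · exact Or.inl ⟨hM, hc⟩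
        · rw [ihφ hφ false _ A]
          rintro M ⟨_, hM⟩
          simp only [Bool.false_eq_true, iff_false]
          exact hM
        · rw [ihψ hψ false _ A]
          rintro M ⟨hM𝓜, hM⟩
          simp only [Bool.false_eq_true, iff_false]
          intro c
          have hand := hh M hM𝓜
          simp only [Bool.false_eq_true, iff_false] at hand
          exact hand ⟨hM, c⟩
  | not φ ih =>
    intro pos 𝓜 A
    cases pos with
    | true =>
      rw [show SatC true (.not φ) 𝓜 = SatC false φ 𝓜 from rfl, ih h false 𝓜 A]
      simp [Tarski, T]
    | false =>
      rw [show SatC false (.not φ) 𝓜 = SatC true φ 𝓜 from rfl, ih h true 𝓜 A]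
      simp [Tarski, T]
  | ex x φ ih =>
    intro pos 𝓜 A
    cases pos with
    | true =>
      constructor
      · rintro ⟨F, hF, hS⟩ M hM
        rw [ih h true _ A] at hS
        simp only [iff_true]
        refine ⟨F M, hF M hM, ?_⟩
        have := hS (setVar M x (F M)) ⟨M, hM, rfl⟩
        rw [expand_setVar] at this
        exact this.mpr rfl
      · intro hh
        classical
        refine ⟨fun M => if hc : ∃ a, a ∈ M.dom ∧
            Tarski (setVar (expand A M) x a) (T φ) then hc.choose else M.asg 0, ?_, ?_⟩
        · intro M hM
          obtain ⟨a, ha, hT⟩ := (hh M hM).mpr rfl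
          beta_reduce
          rw [dif_pos ⟨a, ha, hT⟩]
          exact (Exists.choose_spec (⟨a, ha, hT⟩ : ∃ a, a ∈ M.dom ∧
            Tarski (setVar (expand A M) x a) (T φ))).1
        · rw [ih h true _ A]
          rintro N ⟨M, hM, rfl⟩
          simp only [iff_true]
          obtain ⟨a, ha, hT⟩ := (hh M hM).mpr rfl
          rw [expand_setVar]
          rw [dif_pos ⟨a, ha, hT⟩]
          exact (Exists.choose_spec (⟨a, ha, hT⟩ : ∃ a, a ∈ M.dom ∧
            Tarski (setVar (expand A M) x a) (T φ))).2
    | false =>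
      rw [show SatC false (.ex x φ) 𝓜 = SatC false φ (topSet 𝓜 x) from rfl,
        ih h false _ A]
      constructor
      · intro hh M hM
        simp only [Bool.false_eq_true, iff_false]
        rintro ⟨a, ha, hT⟩
        have := hh (setVar M x a) ⟨M, hM, a, ha, rfl⟩
        simp only [Bool.false_eq_true, iff_false] at this
        rw [← expand_setVar] at hT
        exact this hT
      · rintro hh N ⟨M, hM, b, hb, rfl⟩
        simp only [Bool.false_eq_true, iff_false]
        intro hT
        have := hh M hM
        simp only [Bool.false_eq_true, iff_false] at this
        rw [expand_setVar] at hT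
        exact this ⟨b, hb, hT⟩
  | C x φ ih => exact absurd h id

lemma satC_fwd (φ : FmlC Rel ar) (h : LC φ) :
    ∀ (𝓜 : Set (Model U Rel ar)) (A : Set U), commonDom 𝓜 ⊆ A →
      SatC true φ 𝓜 → ∀ M ∈ 𝓜, Tarski (expand A M) (T φ) := by
  induction φ with
  | atom r v =>
    intro 𝓜 A _ hS M hM
    exact (hS M hM).mpr rfl
  | eq x y =>
    intro 𝓜 A _ hS M hM
    exact (hS M hM).mpr rfl
  | and φ ψ ihφ ihψ =>
    rintro 𝓜 A hA ⟨h1, h2⟩ M hM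
    exact ⟨ihφ h.1 𝓜 A hA h1 M hM, ihψ h.2 𝓜 A hA h2 M hM⟩
  | not φ ih =>
    intro 𝓜 A _ hS M hM
    have := (satC_cfree φ h false 𝓜 A).mp hS M hM
    simp only [Bool.false_eq_true, iff_false] at this
    exact this
  | ex x φ ih =>
    rintro 𝓜 A hA ⟨F, hF, hS⟩ M hM
    refine ⟨F M, hF M hM, ?_⟩
    have := ih h (updSet 𝓜 x F) A (by rw [commonDom_updSet]; exact hA) hS
      (setVar M x (F M)) ⟨M, hM, rfl⟩
    rw [expand_setVar] at this
    exact this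
  | C x φ ih =>
    rintro 𝓜 A hA ⟨a, ha, hS⟩ M hM
    refine ⟨a, ha M hM, ?_, ?_⟩
    · show upd M.asg x a x ∈ A
      simp only [upd, if_pos rfl]
      exact hA ha
    · have := ih h (updSet 𝓜 x fun _ => a) A (by rw [commonDom_updSet]; exact hA) hS
        (setVar M x a) ⟨M, hM, rfl⟩
      rw [expand_setVar] at this
      exact this

lemma satC_bwd (φ : FmlC Rel ar) (h : LC φ) :
    ∀ M : Model U (Option Rel) (arD ar), Tarski M (T φ) →
      SatC true φ ({restrict M} : Set (Model U Rel ar)) := by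
  induction φ with
  | atom r v =>
    intro M hT N hN
    rw [Set.mem_singleton_iff] at hN
    subst hN
    exact iff_of_true hT rfl
  | eq x y =>
    intro M hT N hN
    rw [Set.mem_singleton_iff] at hN
    subst hN
    exact iff_of_true hT rfl
  | and φ ψ ihφ ihψ =>
    intro M hT
    exact ⟨ihφ h.1 M hT.1, ihψ h.2 M hT.2⟩
  | not φ ih =>
    intro M hT
    show SatC false φ {restrict M}
    rw [satC_cfree φ h false _ {u | M.rel none (fun _ => u)}]
    intro N hN
    rw [Set.mem_singleton_iff] at hN
    subst hN
    rw [expand_restrict]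
    simp only [Bool.false_eq_true, iff_false]
    exact hT
  | ex x φ ih =>
    rintro M ⟨a, ha, hT⟩
    refine ⟨fun _ => a, ?_, ?_⟩
    · intro N hN
      rw [Set.mem_singleton_iff] at hN
      subst hN
      exact ha
    · have : updSet ({restrict M} : Set (Model U Rel ar)) x (fun _ => a)
          = {restrict (setVar M x a)} := by
        rw [updSet, Set.image_singleton, restrict_setVar]
      rw [this]
      exact ih h (setVar M x a) hT
  | C x φ ih =>
    rintro M ⟨a, ha, _, hT⟩
    refine ⟨a, ?_, ?_⟩
    · intro N hN
      rw [Set.mem_singleton_iff] at hN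
      subst hN
      exact ha
    · have : updSet ({restrict M} : Set (Model U Rel ar)) x (fun _ => a)
          = {restrict (setVar M x a)} := by
        rw [updSet, Set.image_singleton, restrict_setVar]
      rw [this]
      exact ih h (setVar M x a) hT

theorem LC_sat_iff_translation_sat {U : Type} (φ : FmlC Rel ar)
    (hLC : LC φ) (hsent : fv φ = ∅) :
    (∃ 𝓜 : Set (Model U Rel ar), 𝓜.Nonempty ∧ SatC true φ 𝓜) ↔
    (∃ M : Model U (Option Rel) (arD ar), Tarski M (T φ)) := by
  constructor
  · rintro ⟨𝓜, ⟨M₀, hM₀⟩, hS⟩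
    exact ⟨expand (commonDom 𝓜) M₀,
      satC_fwd φ hLC 𝓜 (commonDom 𝓜) (fun _ ha => ha) hS M₀ hM₀⟩
  · rintro ⟨M, hT⟩
    exact ⟨{restrict M}, Set.singleton_nonempty _, satC_bwd φ hLC M hT⟩
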